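/- The short exact sequence 1 → G_12 → G_24 → Z/2 → 1, where G_12 = ⟨s, t⟩ ≅ C_3 ⋊ C_4 and the quotient Z/2 is generated by the image of ψ, does not split: there is no subgroup of order 2 in G_24 mapping isomorphically to the quotient. -/

import Mathlib

noncomputable section

/-- The group `G₂₄`, presented with generators `s, t, ψ` (encoded as `0, 1, 2`) and
relations `s³ = 1`, `t⁴ = 1`, `tst⁻¹ = s²`, `ψs = sψ`, `tψ = ψt³`, `ψ² = t²`. -/
def G24rels : Set (FreeGroup (Fin 3)) :=
  { FreeGroup.of 0 ^ 3, FreeGroup.of 1 ^ 4,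
    FreeGroup.of 1 * FreeGroup.of 0 * (FreeGroup.of 1)⁻¹ * (FreeGroup.of 0 ^ 2)⁻¹,
    FreeGroup.of 2 * FreeGroup.of 0 * (FreeGroup.of 0 * FreeGroup.of 2)⁻¹,
    FreeGroup.of 1 * FreeGroup.of 2 * (FreeGroup.of 2 * FreeGroup.of 1 ^ 3)⁻¹,
    FreeGroup.of 2 ^ 2 * (FreeGroup.of 1 ^ 2)⁻¹ }

/-- The group `G₂₄` as a presented group. -/
abbrev G24 := PresentedGroup G24rels

/-- The subgroup `G₁₂ = ⟨s, t⟩ ≅ C₃ ⋊ C₄` of `G₂₄`. -/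
def G12 : Subgroup G24 :=
  Subgroup.closure {PresentedGroup.of (rels := G24rels) 0, PresentedGroup.of 1}

namespace G24aux

def S : G24 := PresentedGroup.of 0
def T : G24 := PresentedGroup.of 1
def P : G24 := PresentedGroup.of 2

lemma G12_eq : G12 = Subgroup.closure {S, T} := rfl

lemma mk_rel {r : FreeGroup (Fin 3)} (hr : r ∈ G24rels) :
    PresentedGroup.mk G24rels r = 1 :=
  (QuotientGroup.eq_one_iff r).mpr (Subgroup.subset_normalClosure hr)

lemma e1 : S ^ 3 = 1 := by
  have := mk_rel (show FreeGroup.of 0 ^ 3 ∈ G24rels by simp [G24rels])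
  simp only [map_pow] at this
  exact this

lemma e2 : T ^ 4 = 1 := by
  have := mk_rel (show FreeGroup.of 1 ^ 4 ∈ G24rels by simp [G24rels])
  simp only [map_pow] at this
  exact this

lemma e4 : P * S = S * P := by
  have := mk_rel (show FreeGroup.of 2 * FreeGroup.of 0 *
    (FreeGroup.of 0 * FreeGroup.of 2)⁻¹ ∈ G24rels by simp [G24rels])
  simp only [map_mul, map_inv] at this
  rw [mul_inv_eq_one] at this
  exact this

lemma e5 : T * P = P * T ^ 3 := by
  have := mk_rel (show FreeGroup.of 1 * FreeGroup.of 2 *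
    (FreeGroup.of 2 * FreeGroup.of 1 ^ 3)⁻¹ ∈ G24rels by simp [G24rels])
  simp only [map_mul, map_inv, map_pow] at this
  rw [mul_inv_eq_one] at this
  exact this

lemma e6 : P ^ 2 = T ^ 2 := by
  have := mk_rel (show FreeGroup.of 2 ^ 2 * (FreeGroup.of 1 ^ 2)⁻¹ ∈ G24rels by
    simp [G24rels])
  simp only [map_mul, map_inv, map_pow] at this
  rw [mul_inv_eq_one] at this
  exact this

lemma hS : S ∈ G12 := Subgroup.subset_closure (by left; rfl)
lemma hT : T ∈ G12 := Subgroup.subset_closure (by right; rfl)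

lemma G12_le {K : Subgroup G24} (h0 : S ∈ K) (h1 : T ∈ K) : G12 ≤ K := by
  rw [G12_eq]
  exact (Subgroup.closure_le K).mpr (by rintro x (rfl | rfl) <;> assumption)

lemma conjPT : P * T * P⁻¹ = T⁻¹ := by
  have h1 : P * T ^ 3 * P⁻¹ = T := by rw [← e5]; group
  have h2 : P * T ^ 2 * P⁻¹ = T ^ 2 := by rw [← e6]; group
  have h3 : P * T * P⁻¹ = (P * T ^ 3 * P⁻¹) * (P * T ^ 2 * P⁻¹)⁻¹ := by group
  rw [h1, h2] at h3
  rw [h3]; group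

lemma conjPS : P * S * P⁻¹ = S := by rw [e4]; group

lemma conjPiS : P⁻¹ * S * P = S := by
  rw [mul_assoc, ← e4]; group

lemma conjPiT : P⁻¹ * T * P = T ^ 3 := by
  rw [mul_assoc, e5]; group

lemma conj_mem {g : G24} (hg : g ∈ G12) : P * g * P⁻¹ ∈ G12 := by
  have hle : G12 ≤ Subgroup.comap (MulAut.conj P).toMonoidHom G12 := by
    apply G12_le <;> simp only [Subgroup.mem_comap, MulEquiv.coe_toMonoidHom,
      MulAut.conj_apply]
    · rw [conjPS]; exact hS
    · rw [conjPT]; exact inv_mem hT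
  simpa [MulAut.conj_apply] using hle hg

lemma Pinv : P⁻¹ = (T ^ 2)⁻¹ * P := by
  have : ((T ^ 2)⁻¹ * P) * P = 1 := by
    rw [mul_assoc, ← pow_two, e6]; group
  exact (eq_inv_of_mul_eq_one_left this).symm

lemma decomp (x : G24) : x ∈ G12 ∨ ∃ g ∈ G12, x = g * P := by
  induction x using PresentedGroup.induction_on with
  | H z =>
    induction z using FreeGroup.induction_on with
    | C1 => left; simpa using one_mem G12
    | of i =>
      fin_cases i
      · left; exact hS
      · left; exact hT
      · right; exact ⟨1, one_mem _, (one_mul P).symm⟩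
    | inv_of i _ =>
      rw [map_inv]
      fin_cases i
      · left; exact inv_mem hS
      · left; exact inv_mem hT
      · right
        exact ⟨(T ^ 2)⁻¹, inv_mem (pow_mem hT 2), Pinv⟩
    | mul z w hz hw =>
      rw [map_mul]
      rcases hz with hz | ⟨g, hg, hgx⟩
      · rcases hw with hw | ⟨g', hg', hgy⟩
        · left; exact mul_mem hz hw
        · right
          refine ⟨PresentedGroup.mk G24rels z * g', mul_mem hz hg', by rw [hgy]; group⟩
      · rcases hw with hw | ⟨g', hg', hgy⟩
        · right
          refine ⟨g * (P * PresentedGroup.mk G24rels w * P⁻¹),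
            mul_mem hg (conj_mem hw), by rw [hgx]; group⟩
        · left
          have hxy : PresentedGroup.mk G24rels z * PresentedGroup.mk G24rels w
              = g * (P * g' * P⁻¹) * T ^ 2 := by
            rw [hgx, hgy, ← e6]; group
          rw [hxy]
          exact mul_mem (mul_mem hg (conj_mem hg')) (pow_mem hT 2)

/-! ### The concrete model: the dicyclic group of order 24 -/

def fM : Fin 3 → QuaternionGroup 6 :=
  ![QuaternionGroup.a 4, QuaternionGroup.xa 0, QuaternionGroup.a 9]

lemma relsM : ∀ r ∈ G24rels, FreeGroup.lift fM r = 1 := by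
  intro r hr
  simp only [G24rels, Set.mem_insert_iff, Set.mem_singleton_iff] at hr
  rcases hr with rfl | rfl | rfl | rfl | rfl | rfl <;>
    simp [fM] <;> decide

def φ : G24 →* QuaternionGroup 6 := PresentedGroup.toGroup relsM

def par : ZMod (2 * 6) → ZMod 2 := ZMod.castHom (show 2 ∣ 12 by norm_num) (ZMod 2)

lemma par_add (i j : ZMod (2 * 6)) : par (i + j) = par i + par j :=
  map_add (ZMod.castHom (show 2 ∣ 12 by norm_num) (ZMod 2)) i j

lemma par_sub (i j : ZMod (2 * 6)) : par (i - j) = par i - par j :=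
  map_sub (ZMod.castHom (show 2 ∣ 12 by norm_num) (ZMod 2)) i j

def π : QuaternionGroup 6 →* Multiplicative (ZMod 2) where
  toFun m := Multiplicative.ofAdd (match m with
    | QuaternionGroup.a i => par i
    | QuaternionGroup.xa i => par i)
  map_one' := by
    show Multiplicative.ofAdd (par 0) = 1
    decide
  map_mul' := by
    rintro (i | i) (j | j) <;>
      simp only [QuaternionGroup.a_mul_a, QuaternionGroup.a_mul_xa,
        QuaternionGroup.xa_mul_a, QuaternionGroup.xa_mul_xa] <;>
      rw [show ∀ u v : ZMod 2, Multiplicative.ofAdd u * Multiplicative.ofAdd v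
        = Multiplicative.ofAdd (u + v) from fun _ _ => rfl] <;>
      congr 1
    · exact par_add i j
    · rw [par_sub]
      have : ∀ u v : ZMod 2, u - v = v + u := by decide
      exact this _ _
    · exact par_add i j
    · rw [par_sub, par_add]
      have h6 : par ((6 : ℕ) : ZMod (2 * 6)) = 0 := by decide
      rw [h6]
      have : ∀ u v : ZMod 2, 0 + u - v = v + u := by decide
      exact this _ _

lemma π_a (i : ZMod (2 * 6)) : π (QuaternionGroup.a i) = Multiplicative.ofAdd (par i) := rfl
lemma π_xa (i : ZMod (2 * 6)) : π (QuaternionGroup.xa i) = Multiplicative.ofAdd (par i) := rfl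

def q : G24 →* Multiplicative (ZMod 2) := π.comp φ

lemma qS : q S = 1 := by
  show π (φ (PresentedGroup.of 0)) = 1
  rw [φ, PresentedGroup.toGroup.of]
  show π (QuaternionGroup.a 4) = 1
  rw [π_a]; decide

lemma qT : q T = 1 := by
  show π (φ (PresentedGroup.of 1)) = 1
  rw [φ, PresentedGroup.toGroup.of]
  show π (QuaternionGroup.xa 0) = 1
  rw [π_xa]; decide

lemma qP : q P = Multiplicative.ofAdd 1 := by
  show π (φ (PresentedGroup.of 2)) = _
  rw [φ, PresentedGroup.toGroup.of]
  show π (QuaternionGroup.a 9) = _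
  rw [π_a]; decide

lemma ker_eq : G12 = q.ker := by
  apply le_antisymm
  · exact G12_le (MonoidHom.mem_ker.mpr qS) (MonoidHom.mem_ker.mpr qT)
  · intro x hx
    rcases decomp x with h | ⟨g, hg, rfl⟩
    · exact h
    · exfalso
      have hg1 : q g = 1 :=
        MonoidHom.mem_ker.mp (G12_le (MonoidHom.mem_ker.mpr qS) (MonoidHom.mem_ker.mpr qT) hg)
      have : q (g * P) = Multiplicative.ofAdd 1 := by rw [map_mul, hg1, qP, one_mul]
      rw [MonoidHom.mem_ker, this] at hx
      exact absurd hx (by decide)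

lemma q_surj : Function.Surjective q := by
  intro y
  have hy : y = 1 ∨ y = Multiplicative.ofAdd 1 := by revert y; decide
  rcases hy with rfl | rfl
  · exact ⟨1, map_one q⟩
  · exact ⟨P, qP⟩

lemma order2 (m : QuaternionGroup 6) (hm : m * m = 1) : π m = 1 := by
  cases m with
  | a i =>
    rw [QuaternionGroup.a_mul_a, QuaternionGroup.one_def] at hm
    have hii : i + i = 0 := by injection hm
    have hpar : par i = 0 := by revert hii; revert i; decide
    rw [π_a, hpar]; rfl
  | xa i =>
    exfalso
    rw [QuaternionGroup.xa_mul_xa, QuaternionGroup.one_def] at hm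
    have h6 : (6 : ZMod (2 * 6)) + i - i = 0 := by injection hm
    rw [add_sub_cancel_right] at h6
    exact absurd h6 (by decide)

end G24aux

/-- the short exact sequence `1 → G₁₂ → G₂₄ → Z/2 → 1` does not split:
`G₁₂` is normal of index 2, and there is no subgroup of order 2 of `G₂₄` mapping
isomorphically (bijectively) onto the quotient `G₂₄/G₁₂`. -/
theorem G24_extension_does_not_split :
    G12.Normal ∧ Nat.card (G24 ⧸ G12) = 2 ∧
      ¬ ∃ H : Subgroup G24, Nat.card ↥H = 2 ∧
        Function.Bijective (fun h : ↥H => (QuotientGroup.mk h.val : G24 ⧸ G12)) := by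
  have hker := G24aux.ker_eq
  refine ⟨by rw [hker]; exact G24aux.q.normal_ker, ?_, ?_⟩
  · rw [hker]
    rw [Nat.card_congr (QuotientGroup.quotientKerEquivOfSurjective G24aux.q G24aux.q_surj).toEquiv]
    simp [Nat.card_eq_fintype_card]
  · rintro ⟨H, hcard, hbij⟩
    have hfin : Finite H := Nat.finite_of_card_ne_zero (by omega)
    have hnt : Nontrivial H := Finite.one_lt_card_iff_nontrivial.mp (by omega)
    obtain ⟨x, hx1⟩ := exists_ne (1 : H)
    have hord : x ^ 2 = 1 := by
      have := pow_card_eq_one' (G := H) (x := x)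
      rwa [hcard] at this
    have hx2 : (x : G24) * (x : G24) = 1 := by
      have := congrArg (Subtype.val) hord
      rw [pow_two] at this
      exact_mod_cast this
    have hmk : (QuotientGroup.mk (x : G24) : G24 ⧸ G12) ≠ QuotientGroup.mk (1 : G24) := by
      intro h
      apply hx1
      apply hbij.injective
      show (QuotientGroup.mk (x : G24) : G24 ⧸ G12) = QuotientGroup.mk ((1 : H) : G24)
      rw [OneMemClass.coe_one]
      exact h
    have hxnot : (x : G24) ∉ G12 := by
      intro hmem
      apply hmk
      rw [QuotientGroup.eq]
      simpa using inv_mem hmem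
    apply hxnot
    rw [hker, MonoidHom.mem_ker]
    have hφ : G24aux.φ (x : G24) * G24aux.φ (x : G24) = 1 := by rw [← map_mul, hx2, map_one]
    exact G24aux.order2 _ hφ

end
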